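/- Let r ≥ 2 and n, k, ℓ be naturals with ℓ ≤ k ≤ n, and let ε > 0 with e(k-ℓ)/(n-ℓ) ≤ n^{-ε}. Then for every fixed δ with 0 < δ < ε and t = e⁻¹(r-1)(δ ln n)^{1/(r-1)} - ℓ, the sum ∑_{v=1}^{⌊t⌋} C(n-ℓ, v) · 2^{C(v+ℓ,r) - C(ℓ,r)} · (v(k-ℓ)/(n-ℓ)²)^v is at most 2^{C(ℓ, r-1)} · n^{-ε}/(1 - n^{-ε+δ}), for sufficiently large n. -/

import Mathlib

open Finset Nat

lemma pow_le_exp_mul_factorial' (v : ℕ) : ((v : ℝ)) ^ v ≤ Real.exp 1 ^ v * v ! := by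
  have h := Real.pow_div_factorial_le_exp (x := (v:ℝ)) (Nat.cast_nonneg v) v
  rw [div_le_iff₀ (by positivity)] at h
  calc ((v:ℝ))^v ≤ Real.exp v * v ! := h
    _ = Real.exp 1 ^ v * v ! := by rw [Real.exp_one_pow]

lemma choose_mul_pow_le (M s : ℕ) : (M.choose s : ℝ) * (s : ℝ) ^ s ≤ (Real.exp 1 * M) ^ s := by
  calc (M.choose s : ℝ) * (s:ℝ)^s ≤ ((M:ℝ)^s / s !) * (Real.exp 1 ^ s * s !) := by
        apply mul_le_mul (Nat.choose_le_pow_div s M) (pow_le_exp_mul_factorial' s)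
          (by positivity) (by positivity)
    _ = (Real.exp 1 * M)^s := by
        rw [mul_pow]; field_simp

lemma hockey (ℓ r' : ℕ) : ∀ v : ℕ,
    (ℓ + v).choose (r' + 1) = ℓ.choose (r' + 1) + ∑ i ∈ range v, (ℓ + i).choose r' := by
  intro v
  induction v with
  | zero => simp
  | succ v ih =>
    have h : (ℓ + (v+1)).choose (r'+1) = (ℓ+v).choose r' + (ℓ+v).choose (r'+1) := by
      rw [← add_assoc]; exact Nat.choose_succ_succ (ℓ+v) r'
    rw [h, ih, sum_range_succ]; ring

theorem low_part_sum_bound (r : ℕ) (hr : 2 ≤ r) (ε δ : ℝ) (hδ : 0 < δ) (hδε : δ < ε) :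
    ∃ N : ℕ, ∀ n ≥ N, ∀ k ℓ : ℕ, ℓ ≤ k → k ≤ n →
      Real.exp 1 * ((k : ℝ) - ℓ) / ((n : ℝ) - ℓ) ≤ (n : ℝ) ^ (-ε) →
      ∑ v ∈ Finset.Icc 1
          (⌊(Real.exp 1)⁻¹ * ((r : ℝ) - 1) *
              (δ * Real.log n) ^ ((1 : ℝ) / ((r : ℝ) - 1)) - ℓ⌋₊),
        ((n - ℓ).choose v : ℝ) * 2 ^ ((v + ℓ).choose r - ℓ.choose r) *
          ((v : ℝ) * ((k : ℝ) - ℓ) / ((n : ℝ) - ℓ) ^ 2) ^ v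
      ≤ 2 ^ (ℓ.choose (r - 1)) * (n : ℝ) ^ (-ε) / (1 - (n : ℝ) ^ (-ε + δ)) := by
  refine ⟨2, ?_⟩
  intro n hn k ℓ hlk hkn hyp
  have hn1 : (1:ℝ) < n := by exact_mod_cast lt_of_lt_of_le one_lt_two (by exact_mod_cast hn)
  have hn0 : (0:ℝ) < n := lt_trans one_pos hn1
  have hxlt : (n:ℝ)^(-ε+δ) < 1 :=
    Real.rpow_lt_one_of_one_lt_of_neg hn1 (by linarith)
  have hx0 : (0:ℝ) < (n:ℝ)^(-ε+δ) := Real.rpow_pos_of_pos hn0 _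
  have hne : (0:ℝ) < (n:ℝ)^(-ε) := Real.rpow_pos_of_pos hn0 _
  have hRHS : (0:ℝ) ≤ 2 ^ (ℓ.choose (r - 1)) * (n : ℝ) ^ (-ε) / (1 - (n : ℝ) ^ (-ε + δ)) := by
    apply div_nonneg (by positivity) (by linarith)
  set t : ℝ := (Real.exp 1)⁻¹ * ((r : ℝ) - 1) *
      (δ * Real.log n) ^ ((1 : ℝ) / ((r : ℝ) - 1)) - ℓ with ht_def
  set T : ℕ := ⌊t⌋₊ with hT_def
  rcases eq_or_lt_of_le hlk with hkl | hkl
  · -- k = ℓ : all terms vanish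
    have : ∀ v ∈ Finset.Icc 1 T,
        ((n - ℓ).choose v : ℝ) * 2 ^ ((v + ℓ).choose r - ℓ.choose r) *
          ((v : ℝ) * ((k : ℝ) - ℓ) / ((n : ℝ) - ℓ) ^ 2) ^ v = 0 := by
      intro v hv
      have hv1 : 1 ≤ v := (Finset.mem_Icc.mp hv).1
      have : ((k:ℝ) - ℓ) = 0 := by rw [← hkl]; ring
      rw [this]
      rw [mul_zero, zero_div, zero_pow (by omega), mul_zero]
    rw [Finset.sum_eq_zero this]
    exact hRHS
  · -- ℓ < k
    have hln : ℓ < n := lt_of_lt_of_le hkl hkn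
    have hm : (0:ℝ) < (n:ℝ) - ℓ := sub_pos.mpr (by exact_mod_cast hln)
    have hc : (0:ℝ) < (k:ℝ) - ℓ := sub_pos.mpr (by exact_mod_cast hkl)
    set s : ℕ := r - 1 with hs_def
    have hs1 : 1 ≤ s := by omega
    have hsr : s + 1 = r := by omega
    have hrs : (s:ℝ) = (r:ℝ) - 1 := by
      rw [hs_def]; push_cast [Nat.cast_sub (by omega : 1 ≤ r)]; ring
    have hs0 : (0:ℝ) < s := by exact_mod_cast hs1
    have hlog0 : (0:ℝ) ≤ δ * Real.log n := by
      have := Real.log_pos hn1; positivity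
    set X : ℝ := (δ * Real.log n) ^ ((1 : ℝ) / ((r : ℝ) - 1)) with hX_def
    have hX0 : 0 ≤ X := Real.rpow_nonneg hlog0 _
    have hXs : X ^ s = δ * Real.log n := by
      rw [hX_def, ← Real.rpow_natCast ((δ * Real.log n) ^ ((1:ℝ)/((r:ℝ)-1))) s,
        ← Real.rpow_mul hlog0]
      rw [← hrs]
      rw [one_div, inv_mul_cancel₀ (ne_of_gt hs0), Real.rpow_one]
    have perterm : ∀ v ∈ Finset.Icc 1 T,
        ((n - ℓ).choose v : ℝ) * 2 ^ ((v + ℓ).choose r - ℓ.choose r) *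
          ((v : ℝ) * ((k : ℝ) - ℓ) / ((n : ℝ) - ℓ) ^ 2) ^ v
        ≤ 2 ^ (ℓ.choose (r - 1)) * ((n:ℝ)^(-ε) * ((n:ℝ)^(-ε+δ))^(v-1)) := by
      intro v hv
      obtain ⟨hv1, hvT⟩ := Finset.mem_Icc.mp hv
      have ht1 : (0:ℝ) ≤ t := by
        by_contra h
        push_neg at h
        have : T = 0 := Nat.floor_eq_zero.mpr (by linarith)
        omega
      have hvt : (v:ℝ) ≤ t := le_trans (by exact_mod_cast hvT) (Nat.floor_le ht1)
      -- part A
      have hcast : ((n - ℓ : ℕ) : ℝ) = (n:ℝ) - ℓ := by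
        push_cast [Nat.cast_sub hln.le]; ring
      have hA : ((n-ℓ).choose v : ℝ) * ((v:ℝ)*((k:ℝ)-ℓ)/((n:ℝ)-ℓ)^2)^v ≤ ((n:ℝ)^(-ε))^v := by
        calc ((n-ℓ).choose v : ℝ) * ((v:ℝ)*((k:ℝ)-ℓ)/((n:ℝ)-ℓ)^2)^v
            = (((n-ℓ).choose v : ℝ) * (v:ℝ)^v) * (((k:ℝ)-ℓ)/((n:ℝ)-ℓ)^2)^v := by
              rw [mul_div_assoc, mul_pow]; ring
          _ ≤ (Real.exp 1 * ((n-ℓ:ℕ):ℝ))^v * (((k:ℝ)-ℓ)/((n:ℝ)-ℓ)^2)^v := by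
              apply mul_le_mul_of_nonneg_right (choose_mul_pow_le _ v)
              positivity
          _ = (Real.exp 1 * ((k:ℝ)-ℓ) / ((n:ℝ)-ℓ))^v := by
              rw [← mul_pow, hcast]
              congr 1
              field_simp
          _ ≤ ((n:ℝ)^(-ε))^v := pow_le_pow_left₀
              (div_nonneg (mul_nonneg (Real.exp_pos 1).le hc.le) hm.le) hyp v
      -- part B
      have h1 : (v+ℓ).choose r = ℓ.choose r + ∑ i ∈ range v, (ℓ+i).choose s := by
        rw [add_comm, ← hsr]; exact hockey ℓ s v
      set S' : ℕ := ∑ i ∈ range (v-1), (ℓ+(i+1)).choose s with hS'_def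
      have hd : (v+ℓ).choose r - ℓ.choose r = ℓ.choose (r-1) + S' := by
        rw [h1, Nat.add_sub_cancel_left]
        have hv' : v = (v-1)+1 := by omega
        rw [hv', Finset.sum_range_succ']
        simp only [add_zero, ← hs_def]
        omega
      have perSummand : ∀ i ∈ range (v-1), (((ℓ+(i+1)).choose s : ℕ) : ℝ) ≤ δ * Real.log n := by
        intro i hi
        have hi' : i + 1 ≤ v := by
          have := Finset.mem_range.mp hi; omega
        have hMle : ((ℓ+(i+1) : ℕ):ℝ) ≤ (ℓ:ℝ) + t := by
          have h2 : ((i:ℝ)+1) ≤ (v:ℝ) := by exact_mod_cast hi'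
          push_cast
          linarith
        have hkey : (ℓ:ℝ) + t = (Real.exp 1)⁻¹ * (s:ℝ) * X := by
          rw [ht_def, hrs]; ring
        have hch : (((ℓ+(i+1)).choose s : ℕ) : ℝ)
            ≤ (Real.exp 1 * ((ℓ+(i+1):ℕ):ℝ) / s)^s := by
          rw [div_pow, le_div_iff₀ (by positivity)]
          exact choose_mul_pow_le _ s
        have h2 : Real.exp 1 * ((ℓ+(i+1):ℕ):ℝ) / s ≤ X := by
          have heq : Real.exp 1 * ((ℓ:ℝ) + t) / s = X := by
            rw [hkey]
            field_simp
          calc Real.exp 1 * ((ℓ+(i+1):ℕ):ℝ) / s ≤ Real.exp 1 * ((ℓ:ℝ)+t) / s := by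
                gcongr
            _ = X := heq
        calc (((ℓ+(i+1)).choose s : ℕ) : ℝ) ≤ (Real.exp 1 * ((ℓ+(i+1):ℕ):ℝ) / s)^s := hch
          _ ≤ X ^ s := pow_le_pow_left₀ (by positivity) h2 s
          _ = δ * Real.log n := hXs
      have hS'le : (S' : ℝ) ≤ ((v-1 : ℕ) : ℝ) * (δ * Real.log n) := by
        rw [hS'_def]
        push_cast
        calc ∑ i ∈ range (v-1), (((ℓ+(i+1)).choose s : ℕ) : ℝ)
            ≤ ∑ _i ∈ range (v-1), (δ * Real.log n) := Finset.sum_le_sum perSummand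
          _ = ((v-1 : ℕ) : ℝ) * (δ * Real.log n) := by
              rw [Finset.sum_const, card_range, nsmul_eq_mul]
      have hB : (2:ℝ) ^ ((v+ℓ).choose r - ℓ.choose r)
          ≤ 2 ^ (ℓ.choose (r-1)) * ((n:ℝ)^(δ:ℝ))^(v-1) := by
        rw [hd, pow_add]
        apply mul_le_mul_of_nonneg_left _ (by positivity)
        calc (2:ℝ)^S' ≤ (Real.exp 1)^S' := by
              apply pow_le_pow_left₀ (by norm_num)
              have := Real.add_one_le_exp (1:ℝ); linarith
          _ = Real.exp S' := Real.exp_one_pow S'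
          _ ≤ Real.exp (((v-1 : ℕ):ℝ) * (δ * Real.log n)) := Real.exp_le_exp.mpr hS'le
          _ = ((n:ℝ)^(δ:ℝ))^(v-1) := by
              rw [Real.rpow_def_of_pos hn0, ← Real.exp_nat_mul]
              ring_nf
      -- combine
      calc ((n - ℓ).choose v : ℝ) * 2 ^ ((v + ℓ).choose r - ℓ.choose r) *
            ((v : ℝ) * ((k : ℝ) - ℓ) / ((n : ℝ) - ℓ) ^ 2) ^ v
          = (((n - ℓ).choose v : ℝ) * ((v : ℝ) * ((k : ℝ) - ℓ) / ((n : ℝ) - ℓ) ^ 2) ^ v)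
            * (2:ℝ) ^ ((v + ℓ).choose r - ℓ.choose r) := by ring
        _ ≤ ((n:ℝ)^(-ε))^v * (2 ^ (ℓ.choose (r-1)) * ((n:ℝ)^(δ:ℝ))^(v-1)) := by
            apply mul_le_mul hA hB (by positivity) (by positivity)
        _ = 2 ^ (ℓ.choose (r - 1)) * ((n:ℝ)^(-ε) * ((n:ℝ)^(-ε+δ))^(v-1)) := by
            have hv' : v = (v-1)+1 := by omega
            have hpow : ((n:ℝ)^(-ε))^v = ((n:ℝ)^(-ε))^(v-1) * (n:ℝ)^(-ε) := by
              conv_lhs => rw [hv']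
              rw [pow_succ]
            rw [hpow, Real.rpow_add hn0, mul_pow]
            ring
    calc ∑ v ∈ Finset.Icc 1 T,
          ((n - ℓ).choose v : ℝ) * 2 ^ ((v + ℓ).choose r - ℓ.choose r) *
            ((v : ℝ) * ((k : ℝ) - ℓ) / ((n : ℝ) - ℓ) ^ 2) ^ v
        ≤ ∑ v ∈ Finset.Icc 1 T,
            2 ^ (ℓ.choose (r - 1)) * ((n:ℝ)^(-ε) * ((n:ℝ)^(-ε+δ))^(v-1)) :=
          Finset.sum_le_sum perterm
      _ = (2 ^ (ℓ.choose (r - 1)) * (n:ℝ)^(-ε)) * ∑ v ∈ Finset.Icc 1 T, ((n:ℝ)^(-ε+δ))^(v-1) := by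
          rw [Finset.mul_sum]
          apply Finset.sum_congr rfl
          intros; ring
      _ ≤ (2 ^ (ℓ.choose (r - 1)) * (n:ℝ)^(-ε)) * (1 - (n:ℝ)^(-ε+δ))⁻¹ := by
          apply mul_le_mul_of_nonneg_left _ (by positivity)
          have hre : ∑ v ∈ Finset.Icc 1 T, ((n:ℝ)^(-ε+δ))^(v-1)
              = ∑ i ∈ Finset.range T, ((n:ℝ)^(-ε+δ))^i := by
            rw [← Finset.Ico_add_one_right_eq_Icc, Finset.sum_Ico_eq_sum_range]
            simp
          rw [hre]
          calc ∑ i ∈ Finset.range T, ((n:ℝ)^(-ε+δ))^i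
              ≤ ∑' i : ℕ, ((n:ℝ)^(-ε+δ))^i := by
                apply Summable.sum_le_tsum _ (fun i _ => by positivity)
                exact summable_geometric_of_lt_one hx0.le hxlt
            _ = (1 - (n:ℝ)^(-ε+δ))⁻¹ := tsum_geometric_of_lt_one hx0.le hxlt
      _ = 2 ^ (ℓ.choose (r - 1)) * (n : ℝ) ^ (-ε) / (1 - (n : ℝ) ^ (-ε + δ)) := by
          rw [div_eq_mul_inv]
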